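/- Let A, B, C, D be real numbers with D ≠ 0 and let g be the 4×4 real symmetric matrix with rows (2C, −2B, D, 0), (−2B, 2A, 0, D), (D, 0, 0, 0), (0, D, 0, 0). Then there exists an invertible 4×4 real matrix Q such that Qᵀ g Q = diag(1, 1, −1, −1); that is, the symmetric bilinear form defined by g on ℝ⁴ is nondegenerate of split signature (2,2). -/

import Mathlib

open Matrix

private theorem mul_fin_four' {α : Type*} [AddCommMonoid α] [Mul α]
    (a₁₁ a₁₂ a₁₃ a₁₄ a₂₁ a₂₂ a₂₃ a₂₄ a₃₁ a₃₂ a₃₃ a₃₄ a₄₁ a₄₂ a₄₃ a₄₄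
     b₁₁ b₁₂ b₁₃ b₁₄ b₂₁ b₂₂ b₂₃ b₂₄ b₃₁ b₃₂ b₃₃ b₃₄ b₄₁ b₄₂ b₄₃ b₄₄ : α) :
    !![a₁₁, a₁₂, a₁₃, a₁₄;
       a₂₁, a₂₂, a₂₃, a₂₄;
       a₃₁, a₃₂, a₃₃, a₃₄;
       a₄₁, a₄₂, a₄₃, a₄₄] * !![b₁₁, b₁₂, b₁₃, b₁₄;
                                b₂₁, b₂₂, b₂₃, b₂₄;
                                b₃₁, b₃₂, b₃₃, b₃₄;
                                b₄₁, b₄₂, b₄₃, b₄₄] =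
    !![a₁₁*b₁₁ + a₁₂*b₂₁ + a₁₃*b₃₁ + a₁₄*b₄₁, a₁₁*b₁₂ + a₁₂*b₂₂ + a₁₃*b₃₂ + a₁₄*b₄₂,
       a₁₁*b₁₃ + a₁₂*b₂₃ + a₁₃*b₃₃ + a₁₄*b₄₃, a₁₁*b₁₄ + a₁₂*b₂₄ + a₁₃*b₃₄ + a₁₄*b₄₄;
       a₂₁*b₁₁ + a₂₂*b₂₁ + a₂₃*b₃₁ + a₂₄*b₄₁, a₂₁*b₁₂ + a₂₂*b₂₂ + a₂₃*b₃₂ + a₂₄*b₄₂,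
       a₂₁*b₁₃ + a₂₂*b₂₃ + a₂₃*b₃₃ + a₂₄*b₄₃, a₂₁*b₁₄ + a₂₂*b₂₄ + a₂₃*b₃₄ + a₂₄*b₄₄;
       a₃₁*b₁₁ + a₃₂*b₂₁ + a₃₃*b₃₁ + a₃₄*b₄₁, a₃₁*b₁₂ + a₃₂*b₂₂ + a₃₃*b₃₂ + a₃₄*b₄₂,
       a₃₁*b₁₃ + a₃₂*b₂₃ + a₃₃*b₃₃ + a₃₄*b₄₃, a₃₁*b₁₄ + a₃₂*b₂₄ + a₃₃*b₃₄ + a₃₄*b₄₄;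
       a₄₁*b₁₁ + a₄₂*b₂₁ + a₄₃*b₃₁ + a₄₄*b₄₁, a₄₁*b₁₂ + a₄₂*b₂₂ + a₄₃*b₃₂ + a₄₄*b₄₂,
       a₄₁*b₁₃ + a₄₂*b₂₃ + a₄₃*b₃₃ + a₄₄*b₄₃, a₄₁*b₁₄ + a₄₂*b₂₄ + a₄₃*b₃₄ + a₄₄*b₄₄] := by
  ext i j
  fin_cases i <;> fin_cases j
    <;> simp [Matrix.mul_apply, Fin.sum_univ_four, ← add_assoc]

private theorem transpose_fin_four' {α : Type*}
    (a₁₁ a₁₂ a₁₃ a₁₄ a₂₁ a₂₂ a₂₃ a₂₄ a₃₁ a₃₂ a₃₃ a₃₄ a₄₁ a₄₂ a₄₃ a₄₄ : α) :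
    (!![a₁₁, a₁₂, a₁₃, a₁₄;
        a₂₁, a₂₂, a₂₃, a₂₄;
        a₃₁, a₃₂, a₃₃, a₃₄;
        a₄₁, a₄₂, a₄₃, a₄₄])ᵀ =
     !![a₁₁, a₂₁, a₃₁, a₄₁;
        a₁₂, a₂₂, a₃₂, a₄₂;
        a₁₃, a₂₃, a₃₃, a₄₃;
        a₁₄, a₂₄, a₃₄, a₄₄] := by
  ext i j
  fin_cases i <;> fin_cases j <;> rfl

private theorem vec4_eq' {α : Type*} {a₀ a₁ a₂ a₃ b₀ b₁ b₂ b₃ : α}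
    (h₀ : a₀ = b₀) (h₁ : a₁ = b₁) (h₂ : a₂ = b₂) (h₃ : a₃ = b₃) :
    ![a₀, a₁, a₂, a₃] = ![b₀, b₁, b₂, b₃] := by
  subst h₀ h₁ h₂ h₃; rfl

private theorem diagonal_fin_four' {α : Type*} [Zero α] (a b c d : α) :
    Matrix.diagonal ![a, b, c, d] =
      !![a, 0, 0, 0; 0, b, 0, 0; 0, 0, c, 0; 0, 0, 0, d] := by
  ext i j
  fin_cases i <;> fin_cases j <;> rfl

set_option maxHeartbeats 2000000 in
/-- For `D ≠ 0` the Lychagin–Rubtsov symmetric matrix `g` is congruent to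
`diag(1,1,−1,−1)`: the associated symmetric bilinear form on `ℝ⁴` is nondegenerate
of split signature `(2,2)`. -/
theorem LR_metric_split_signature (A B C D : ℝ) (hD : D ≠ 0)
    (g : Matrix (Fin 4) (Fin 4) ℝ)
    (hg : g = !![2*C, -2*B, D, 0; -2*B, 2*A, 0, D; D, 0, 0, 0; 0, D, 0, 0]) :
    ∃ Q : Matrix (Fin 4) (Fin 4) ℝ, IsUnit Q ∧
      Qᵀ * g * Q = Matrix.diagonal ![1, 1, -1, -1] := by
  refine ⟨!![1, 0, 1, 0;
             0, 1, 0, 1;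
             (1-2*C)/(2*D), B/D, -(1+2*C)/(2*D), B/D;
             B/D, (1-2*A)/(2*D), B/D, -(1+2*A)/(2*D)], ?_, ?_⟩
  · refine (Matrix.isUnit_iff_isUnit_det _).mpr (Matrix.isUnit_det_of_right_inverse (B :=
      !![(1+2*C)/2, -B, D, 0;
         -B, (1+2*A)/2, 0, D;
         (1-2*C)/2, B, -D, 0;
         B, (1-2*A)/2, 0, -D]) ?_)
    rw [mul_fin_four', show (1 : Matrix (Fin 4) (Fin 4) ℝ) =
        !![1,0,0,0;0,1,0,0;0,0,1,0;0,0,0,1] from by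
      ext i j; fin_cases i <;> fin_cases j <;> rfl]
    refine congrArg Matrix.of (vec4_eq' (vec4_eq' ?_ ?_ ?_ ?_) (vec4_eq' ?_ ?_ ?_ ?_)
      (vec4_eq' ?_ ?_ ?_ ?_) (vec4_eq' ?_ ?_ ?_ ?_)) <;>
      · field_simp
        try ring
  · subst hg
    rw [transpose_fin_four', mul_fin_four', mul_fin_four', diagonal_fin_four']
    refine congrArg Matrix.of (vec4_eq' (vec4_eq' ?_ ?_ ?_ ?_) (vec4_eq' ?_ ?_ ?_ ?_)
      (vec4_eq' ?_ ?_ ?_ ?_) (vec4_eq' ?_ ?_ ?_ ?_)) <;>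
      · field_simp
        try ring
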